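/- arXiv:math/0102082 — 3 statements merged into one kernel-verified Lean document; each statement's English description precedes it below -/
import Mathlib

section
/- For every u ∈ A and every basis index k one has Gram(u * u * T_k) = Gram(u) * g⁻¹ * Gram(T_k) * g⁻¹ * Gram(u). (With u = exp(Σ y_i T_i) this is the paper's identity γ_k^{ij} = Σ_{e,f} φ^i_e g_k^{ef} φ_f^j, after raising indices by g⁻¹ on both sides.) -/
open Matrix


/-- With `Gram a i j = τ (a * Tᵢ * Tⱼ)` and `g = Gram 1` invertible, for every
`u ∈ A` and every basis index `k` one has
`Gram (u * u * T k) = Gram u * g⁻¹ * Gram (T k) * g⁻¹ * Gram u`. -/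
theorem gram_sq_mul_basis
    {R : Type*} [CommRing R] {A : Type*} [CommRing A] [Algebra R A]
    {r : ℕ} (T : Module.Basis (Fin (r + 1)) R A) (τ : A →ₗ[R] R)
    (Gram : A → Matrix (Fin (r + 1)) (Fin (r + 1)) R)
    (hGram : ∀ a i j, Gram a i j = τ (a * T i * T j))
    (g : Matrix (Fin (r + 1)) (Fin (r + 1)) R) (hg : g = Gram 1)
    (hinv : IsUnit g)
    (u : A) (k : Fin (r + 1)) :
    Gram (u * u * T k) = Gram u * g⁻¹ * Gram (T k) * g⁻¹ * Gram u := by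
  set L := Algebra.leftMulMatrix T with hL
  -- key structural fact : Gram a = (L a)ᵀ * g
  have key : ∀ a : A, Gram a = (L a)ᵀ * g := by
    intro a
    ext i j
    rw [Matrix.mul_apply, hGram]
    have expand : a * T i = ∑ e, T.repr (a * T i) e • T e := (T.sum_repr (a * T i)).symm
    calc τ (a * T i * T j)
        = τ ((∑ e, T.repr (a * T i) e • T e) * T j) := by rw [← expand]
      _ = τ (∑ e, T.repr (a * T i) e • (T e * T j)) := by rw [Finset.sum_mul]; simp [smul_mul_assoc]
      _ = ∑ e, T.repr (a * T i) e * τ (T e * T j) := by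
            rw [map_sum]; simp [LinearMap.map_smul, smul_eq_mul]
      _ = ∑ e, (L a)ᵀ i e * g e j := by
            apply Finset.sum_congr rfl
            intro e _
            rw [Matrix.transpose_apply, hL, Algebra.leftMulMatrix_eq_repr_mul, hg, hGram]
            ring_nf
  have hdet : IsUnit g.det := (Matrix.isUnit_iff_isUnit_det g).mp hinv
  have hgi : g * g⁻¹ = 1 := Matrix.mul_nonsing_inv g hdet
  have hcomm : u * u * T k = u * T k * u := by ring
  rw [key, key, key, hcomm, _root_.map_mul, _root_.map_mul]
  calc (L u * L (T k) * L u)ᵀ * g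
      = (L u)ᵀ * (L (T k))ᵀ * (L u)ᵀ * g := by
        rw [Matrix.transpose_mul, Matrix.transpose_mul]
        noncomm_ring
    _ = (L u)ᵀ * g * g⁻¹ * ((L (T k))ᵀ * g) * g⁻¹ * ((L u)ᵀ * g) := by
        rw [Matrix.mul_assoc ((L u)ᵀ) g g⁻¹, hgi, Matrix.mul_one]
        have h2 : (L u)ᵀ * ((L (T k))ᵀ * g) * g⁻¹ = (L u)ᵀ * (L (T k))ᵀ * (g * g⁻¹) := by
          noncomm_ring [Matrix.mul_assoc]
        rw [h2]
        rw [hgi, Matrix.mul_one]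
        noncomm_ring [Matrix.mul_assoc]
end

section
/- Define P¹ := Γ_{x₁}·Γ_{x₂} + y₁·Γ_{x₂}² and P² := (1/2)·Γ_{x₂}² in ℚ[[x₁,x₂,y₁,y₂]]. Then after the substitution (x₁,x₂,y₁,y₂) = (s, u+v, v, w) one has the identities in ℚ[[s,u,v,w]]: ∂²/∂s² of (P¹ after substitution) = G_{us}·G_{ss} + G_{uss}·G_s + G_u·(L G_{ss}) + G_{us}·(L G_s), and ∂²/∂s² of (P² after substitution) = G_{us}·G_{us} + G_{uss}·G_u. (These are the paper's Equations (P1forP2) and (P2forP2): the expressions of the Π-class potentials P¹ = (1/2)Σ Γ_{x_e} γ₁^{ef} Γ_{x_f} and P² = (1/2)Σ Γ_{x_e} γ₂^{ef} Γ_{x_f} of P² in terms of the characteristic number potential.) -/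
/-- Formal partial derivative of a multivariate power series with respect to the `i`-th
variable: the coefficient at a monomial `m` is `(m i + 1)` times the coefficient at
`m + eᵢ`. -/
noncomputable def pd {n : ℕ} (i : Fin n) (F : MvPowerSeries (Fin n) ℚ) :
    MvPowerSeries (Fin n) ℚ :=
  fun m => ((m i : ℚ) + 1) * MvPowerSeries.coeff (R := ℚ) (m + Finsupp.single i 1) F

/-- Substitution `(x₁,x₂,y₁,y₂) = (s, u+v, v, w)` turning a power series
`Γ ∈ ℚ[[x₁,x₂,y₁,y₂]]` into `G = Γ(s, u+v, v, w) ∈ ℚ[[s,u,v,w]]` (variables of the source are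
indexed `x₁,x₂,y₁,y₂ = 0,1,2,3` and of the target `s,u,v,w = 0,1,2,3`):  the coefficient of
`G` at `s^a u^b v^c w^d` is `∑_{k=0}^{c} binom(b+k, b) · (coeff of Γ at x₁^a x₂^{b+k}
y₁^{c-k} y₂^d)`, coming from the expansion of `(u+v)^{b+k}`. -/
noncomputable def substP2 (Γ : MvPowerSeries (Fin 4) ℚ) : MvPowerSeries (Fin 4) ℚ :=
  fun m => ∑ k ∈ Finset.range (m 2 + 1),
    (Nat.choose (m 1 + k) (m 1) : ℚ) *
      MvPowerSeries.coeff (R := ℚ)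
        (Finsupp.single 0 (m 0) + Finsupp.single 1 (m 1 + k) +
         Finsupp.single 2 (m 2 - k) + Finsupp.single 3 (m 3)) Γ


open Finset

noncomputable def mk4 (a b c d : ℕ) : Fin 4 →₀ ℕ :=
  Finsupp.single 0 a + Finsupp.single 1 b + Finsupp.single 2 c + Finsupp.single 3 d

@[simp] lemma mk4_app0 (a b c d : ℕ) : mk4 a b c d 0 = a := by simp [mk4, Finsupp.single_apply]
@[simp] lemma mk4_app1 (a b c d : ℕ) : mk4 a b c d 1 = b := by simp [mk4, Finsupp.single_apply]
@[simp] lemma mk4_app2 (a b c d : ℕ) : mk4 a b c d 2 = c := by simp [mk4, Finsupp.single_apply]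
@[simp] lemma mk4_app3 (a b c d : ℕ) : mk4 a b c d 3 = d := by simp [mk4, Finsupp.single_apply]

lemma mk4_eta (m : Fin 4 →₀ ℕ) : mk4 (m 0) (m 1) (m 2) (m 3) = m := by
  ext i; fin_cases i <;> simp

lemma mk4_inj {a b c d a' b' c' d' : ℕ} :
    mk4 a b c d = mk4 a' b' c' d' ↔ a = a' ∧ b = b' ∧ c = c' ∧ d = d' := by
  constructor
  · intro h
    exact ⟨by simpa using DFunLike.congr_fun h 0, by simpa using DFunLike.congr_fun h 1,
      by simpa using DFunLike.congr_fun h 2, by simpa using DFunLike.congr_fun h 3⟩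
  · rintro ⟨rfl, rfl, rfl, rfl⟩; rfl

lemma mk4_add (a b c d a' b' c' d' : ℕ) :
    mk4 a b c d + mk4 a' b' c' d' = mk4 (a+a') (b+b') (c+c') (d+d') := by
  ext i; fin_cases i <;> simp

lemma single0_eq (a : ℕ) : (Finsupp.single 0 a : Fin 4 →₀ ℕ) = mk4 a 0 0 0 := by
  ext i; fin_cases i <;> simp
lemma single1_eq (a : ℕ) : (Finsupp.single 1 a : Fin 4 →₀ ℕ) = mk4 0 a 0 0 := by
  ext i; fin_cases i <;> simp
lemma single2_eq (a : ℕ) : (Finsupp.single 2 a : Fin 4 →₀ ℕ) = mk4 0 0 a 0 := by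
  ext i; fin_cases i <;> simp

lemma add_e0 (m : Fin 4 →₀ ℕ) :
    m + Finsupp.single 0 1 = mk4 (m 0 + 1) (m 1) (m 2) (m 3) := by
  ext i; fin_cases i <;> simp [Finsupp.add_apply, Finsupp.single_apply]
lemma add_e1 (m : Fin 4 →₀ ℕ) :
    m + Finsupp.single 1 1 = mk4 (m 0) (m 1 + 1) (m 2) (m 3) := by
  ext i; fin_cases i <;> simp [Finsupp.add_apply, Finsupp.single_apply]
lemma mk4_add_single0 (a b c d : ℕ) :
    mk4 a b c d + Finsupp.single 0 1 = mk4 (a+1) b c d := by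
  rw [single0_eq, mk4_add]; norm_num
lemma mk4_add_single1 (a b c d : ℕ) :
    mk4 a b c d + Finsupp.single 1 1 = mk4 a (b+1) c d := by
  rw [single1_eq, mk4_add]; norm_num

lemma coeff_pd {n : ℕ} (i : Fin n) (F : MvPowerSeries (Fin n) ℚ) (m : Fin n →₀ ℕ) :
    MvPowerSeries.coeff (R := ℚ) m (pd i F) =
      ((m i : ℚ) + 1) * MvPowerSeries.coeff (R := ℚ) (m + Finsupp.single i 1) F := rfl

lemma pd_add {n : ℕ} (i : Fin n) (F H : MvPowerSeries (Fin n) ℚ) :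
    pd i (F + H) = pd i F + pd i H := by
  ext m
  simp [coeff_pd, mul_add]

lemma pd_C_mul {n : ℕ} (i : Fin n) (q : ℚ) (F : MvPowerSeries (Fin n) ℚ) :
    pd i (MvPowerSeries.C (σ := Fin n) (R := ℚ) q * F) = MvPowerSeries.C (σ := Fin n) (R := ℚ) q * pd i F := by
  ext m
  simp [coeff_pd, MvPowerSeries.coeff_C_mul]
  ring

lemma pd_C {n : ℕ} (i : Fin n) (q : ℚ) :
    pd i (MvPowerSeries.C (σ := Fin n) (R := ℚ) q) = 0 := by
  ext m
  have hne : m + Finsupp.single i 1 ≠ 0 := by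
    intro h
    have := DFunLike.congr_fun h i
    simp [Finsupp.add_apply, Finsupp.single_eq_same] at this
  simp [coeff_pd, MvPowerSeries.coeff_C, hne]

lemma pd_comm {n : ℕ} (i j : Fin n) (F : MvPowerSeries (Fin n) ℚ) :
    pd i (pd j F) = pd j (pd i F) := by
  ext m
  simp only [coeff_pd, Finsupp.add_apply, Finsupp.single_apply]
  rw [add_right_comm m (Finsupp.single j 1) (Finsupp.single i 1)]
  rcases eq_or_ne i j with rfl | h
  · simp
  · rw [if_neg h, if_neg (Ne.symm h)]
    push_cast
    ring

lemma shift_aux {n : ℕ} (m : Fin n →₀ ℕ) (i : Fin n) (f : (Fin n →₀ ℕ) → (Fin n →₀ ℕ) → ℚ) :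
    ∑ pq ∈ antidiagonal (m + Finsupp.single i 1), ((pq.1 : Fin n →₀ ℕ) i : ℚ) * f pq.1 pq.2
      = ∑ pq ∈ antidiagonal m,
          (((pq.1 : Fin n →₀ ℕ) i : ℚ) + 1) * f (pq.1 + Finsupp.single i 1) pq.2 := by
  classical
  refine Finset.sum_bij_ne_zero (fun a _ _ => (a.1 - Finsupp.single i 1, a.2)) ?_ ?_ ?_ ?_
  · rintro ⟨p, q⟩ h₁ h₂
    rw [Finset.HasAntidiagonal.mem_antidiagonal] at h₁ ⊢
    have hpi : p i ≠ 0 := by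
      intro h0; apply h₂; simp only [h0]; simp
    ext j
    have hj := DFunLike.congr_fun h₁ j
    simp only [Finsupp.add_apply, Finsupp.tsub_apply, Finsupp.single_apply] at hj ⊢
    split_ifs at hj ⊢ with h
    · subst h; omega
    · omega
  · rintro ⟨p, q⟩ h₁ h₂ ⟨p', q'⟩ h₁' h₂' heq
    have hpi : p i ≠ 0 := by intro h0; apply h₂; simp only [h0]; simp
    have hpi' : p' i ≠ 0 := by intro h0; apply h₂'; simp only [h0]; simp
    simp only [Prod.mk.injEq] at heq
    obtain ⟨hq1, hq2⟩ := heq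
    have hle : Finsupp.single i 1 ≤ p := Finsupp.single_le_iff.2 (by omega)
    have hle' : Finsupp.single i 1 ≤ p' := Finsupp.single_le_iff.2 (by omega)
    have : p = p' := by
      have := congrArg (· + Finsupp.single i 1) hq1
      simpa [tsub_add_cancel_of_le hle, tsub_add_cancel_of_le hle'] using this
    exact Prod.ext this hq2
  · rintro ⟨p, q⟩ h₁ h₂
    refine ⟨(p + Finsupp.single i 1, q), ?_, ?_, ?_⟩
    · rw [Finset.HasAntidiagonal.mem_antidiagonal] at h₁ ⊢
      rw [add_right_comm, h₁]
    · simpa [Finsupp.add_apply, Finsupp.single_eq_same] using h₂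
    · simp
  · rintro ⟨p, q⟩ h₁ h₂
    have hpi : p i ≠ 0 := by intro h0; apply h₂; simp only [h0]; simp
    have hle : Finsupp.single i 1 ≤ p := Finsupp.single_le_iff.2 (by omega)
    simp only [tsub_add_cancel_of_le hle]
    congr 1
    simp only [Finsupp.tsub_apply, Finsupp.single_eq_same]
    rw [Nat.cast_sub (by omega)]
    push_cast
    ring

lemma pd_mul {n : ℕ} (i : Fin n) (F H : MvPowerSeries (Fin n) ℚ) :
    pd i (F * H) = pd i F * H + F * pd i H := by
  classical
  ext m
  rw [map_add, coeff_pd, MvPowerSeries.coeff_mul, MvPowerSeries.coeff_mul,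
    MvPowerSeries.coeff_mul, Finset.mul_sum]
  have key : ∀ pq ∈ antidiagonal (m + Finsupp.single i 1),
      ((m i : ℚ) + 1) * (MvPowerSeries.coeff (R := ℚ) pq.1 F * MvPowerSeries.coeff (R := ℚ) pq.2 H)
        = ((pq.1 : Fin n →₀ ℕ) i : ℚ) * (MvPowerSeries.coeff (R := ℚ) pq.1 F * MvPowerSeries.coeff (R := ℚ) pq.2 H)
          + ((pq.2 : Fin n →₀ ℕ) i : ℚ) * (MvPowerSeries.coeff (R := ℚ) pq.1 F * MvPowerSeries.coeff (R := ℚ) pq.2 H) := by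
    rintro ⟨p, q⟩ hpq
    rw [Finset.HasAntidiagonal.mem_antidiagonal] at hpq
    have h := DFunLike.congr_fun hpq i
    simp only [Finsupp.add_apply, Finsupp.single_eq_same] at h
    rw [← add_mul]
    congr 1
    exact_mod_cast congrArg (Nat.cast : ℕ → ℚ) h.symm
  rw [Finset.sum_congr rfl key, Finset.sum_add_distrib]
  congr 1
  · rw [shift_aux m i (fun p q => MvPowerSeries.coeff (R := ℚ) p F * MvPowerSeries.coeff (R := ℚ) q H)]
    apply Finset.sum_congr rfl
    rintro ⟨p, q⟩ _
    rw [coeff_pd]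
    ring
  · have swap1 : ∑ pq ∈ antidiagonal (m + Finsupp.single i 1),
        ((pq.2 : Fin n →₀ ℕ) i : ℚ) * (MvPowerSeries.coeff (R := ℚ) pq.1 F * MvPowerSeries.coeff (R := ℚ) pq.2 H)
        = ∑ pq ∈ antidiagonal (m + Finsupp.single i 1),
        ((pq.1 : Fin n →₀ ℕ) i : ℚ) * (MvPowerSeries.coeff (R := ℚ) pq.2 F * MvPowerSeries.coeff (R := ℚ) pq.1 H) := by
      rw [← Finset.HasAntidiagonal.map_swap_antidiagonal, Finset.sum_map]
      simp
    rw [swap1, shift_aux m i (fun p q => MvPowerSeries.coeff (R := ℚ) q F * MvPowerSeries.coeff (R := ℚ) p H)]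
    have swap2 : ∑ pq ∈ antidiagonal m,
        (MvPowerSeries.coeff (R := ℚ) pq.1 F * MvPowerSeries.coeff (R := ℚ) pq.2 (pd i H))
        = ∑ pq ∈ antidiagonal m,
        (MvPowerSeries.coeff (R := ℚ) pq.2 F * MvPowerSeries.coeff (R := ℚ) pq.1 (pd i H)) := by
      rw [← Finset.HasAntidiagonal.map_swap_antidiagonal, Finset.sum_map]
      simp
    rw [swap2]
    apply Finset.sum_congr rfl
    rintro ⟨p, q⟩ _
    rw [coeff_pd]
    ring


lemma coeff_substP2 (F : MvPowerSeries (Fin 4) ℚ) (m : Fin 4 →₀ ℕ) :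
    MvPowerSeries.coeff (R := ℚ) m (substP2 F) = ∑ k ∈ Finset.range (m 2 + 1),
      (Nat.choose (m 1 + k) (m 1) : ℚ) *
        MvPowerSeries.coeff (R := ℚ) (mk4 (m 0) (m 1 + k) (m 2 - k) (m 3)) F := rfl

lemma substP2_add (F H : MvPowerSeries (Fin 4) ℚ) :
    substP2 (F + H) = substP2 F + substP2 H := by
  ext m
  simp [coeff_substP2, mul_add, Finset.sum_add_distrib]

lemma substP2_C_mul (q : ℚ) (F : MvPowerSeries (Fin 4) ℚ) :
    substP2 (MvPowerSeries.C (σ := Fin 4) (R := ℚ) q * F) = MvPowerSeries.C (σ := Fin 4) (R := ℚ) q * substP2 F := by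
  ext m
  simp only [coeff_substP2, MvPowerSeries.coeff_C_mul, Finset.mul_sum]
  exact Finset.sum_congr rfl fun k _ => by ring

lemma substP2_pd0 (F : MvPowerSeries (Fin 4) ℚ) :
    substP2 (pd 0 F) = pd 0 (substP2 F) := by
  ext m
  rw [coeff_pd, add_e0, coeff_substP2, coeff_substP2, Finset.mul_sum]
  simp only [mk4_app0, mk4_app1, mk4_app2, mk4_app3]
  apply Finset.sum_congr rfl
  intro k _
  rw [coeff_pd, mk4_add_single0]
  simp only [mk4_app0]
  ring

lemma substP2_pd1 (F : MvPowerSeries (Fin 4) ℚ) :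
    substP2 (pd 1 F) = pd 1 (substP2 F) := by
  ext m
  rw [coeff_pd, add_e1, coeff_substP2, coeff_substP2, Finset.mul_sum]
  simp only [mk4_app0, mk4_app1, mk4_app2, mk4_app3]
  apply Finset.sum_congr rfl
  intro k _
  rw [coeff_pd, mk4_add_single1]
  simp only [mk4_app1]
  have h2 : m 1 + 1 + k = m 1 + k + 1 := by ring
  rw [h2]
  have key : ((m 1 : ℚ) + k + 1) * ((m 1 + k).choose (m 1) : ℕ)
      = ((m 1 : ℚ) + 1) * ((m 1 + k + 1).choose (m 1 + 1) : ℕ) := by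
    have h3 := Nat.add_one_mul_choose_eq (m 1 + k) (m 1)
    exact_mod_cast by push_cast [Nat.succ_eq_add_one] at h3; linarith [h3]
  push_cast
  linear_combination (MvPowerSeries.coeff (R := ℚ) (mk4 (m 0) (m 1 + k + 1) (m 2 - k) (m 3)) F) * key

lemma substP2_mul (F H : MvPowerSeries (Fin 4) ℚ) :
    substP2 (F * H) = substP2 F * substP2 H := by
  classical
  ext m
  rw [coeff_substP2, MvPowerSeries.coeff_mul]
  have lhs1 : ∀ k ∈ Finset.range (m 2 + 1),
      ((m 1 + k).choose (m 1) : ℚ) *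
        MvPowerSeries.coeff (R := ℚ) (mk4 (m 0) (m 1 + k) (m 2 - k) (m 3)) (F * H)
      = ∑ pqjl ∈ (antidiagonal (mk4 (m 0) (m 1 + k) (m 2 - k) (m 3)) ×ˢ antidiagonal k),
            (((pqjl.1.1 : Fin 4 →₀ ℕ) 1).choose pqjl.2.1 : ℚ)
              * (((pqjl.1.2 : Fin 4 →₀ ℕ) 1).choose pqjl.2.2)
              * (MvPowerSeries.coeff (R := ℚ) pqjl.1.1 F * MvPowerSeries.coeff (R := ℚ) pqjl.1.2 H) := by
    intro k hk
    rw [Finset.sum_product, MvPowerSeries.coeff_mul, Finset.mul_sum]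
    apply Finset.sum_congr rfl
    rintro ⟨p, q⟩ hpq
    rw [Finset.HasAntidiagonal.mem_antidiagonal] at hpq
    have h1 : p 1 + q 1 = m 1 + k := by
      have := DFunLike.congr_fun hpq 1
      simpa [Finsupp.add_apply] using this
    have hch : ((m 1 + k).choose (m 1))
        = ∑ jl ∈ antidiagonal k, (p 1).choose jl.1 * (q 1).choose jl.2 := by
      have hsym : (m 1 + k).choose (m 1) = (m 1 + k).choose k := by
        simpa using Nat.choose_symm (Nat.le_add_left k (m 1))
      rw [hsym, ← h1, Nat.add_choose_eq]
    rw [hch]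
    push_cast
    rw [Finset.sum_mul]
  rw [Finset.sum_congr rfl lhs1]
  have rhs1 : ∀ pq ∈ antidiagonal m,
      MvPowerSeries.coeff (R := ℚ) (pq.1 : Fin 4 →₀ ℕ) (substP2 F)
          * MvPowerSeries.coeff (R := ℚ) (pq.2 : Fin 4 →₀ ℕ) (substP2 H)
      = ∑ jl ∈ (Finset.range ((pq.1 : Fin 4 →₀ ℕ) 2 + 1) ×ˢ Finset.range ((pq.2 : Fin 4 →₀ ℕ) 2 + 1)),
          (((pq.1 : Fin 4 →₀ ℕ) 1 + jl.1).choose ((pq.1 : Fin 4 →₀ ℕ) 1) : ℚ)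
            * (((pq.2 : Fin 4 →₀ ℕ) 1 + jl.2).choose ((pq.2 : Fin 4 →₀ ℕ) 1))
            * (MvPowerSeries.coeff (R := ℚ)
                (mk4 ((pq.1 : Fin 4 →₀ ℕ) 0) ((pq.1 : Fin 4 →₀ ℕ) 1 + jl.1)
                     ((pq.1 : Fin 4 →₀ ℕ) 2 - jl.1) ((pq.1 : Fin 4 →₀ ℕ) 3)) F *
               MvPowerSeries.coeff (R := ℚ)
                (mk4 ((pq.2 : Fin 4 →₀ ℕ) 0) ((pq.2 : Fin 4 →₀ ℕ) 1 + jl.2)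
                     ((pq.2 : Fin 4 →₀ ℕ) 2 - jl.2) ((pq.2 : Fin 4 →₀ ℕ) 3)) H) := by
    rintro ⟨p, q⟩ _
    rw [Finset.sum_product, coeff_substP2, coeff_substP2, Finset.sum_mul_sum]
    apply Finset.sum_congr rfl
    intro j _
    apply Finset.sum_congr rfl
    intro l _
    ring
  rw [Finset.sum_congr rfl rhs1]
  rw [Finset.sum_sigma', Finset.sum_sigma']
  refine Finset.sum_bij_ne_zero
    (fun a _ _ => ⟨(mk4 (a.2.1.1 0) (a.2.1.1 1 - a.2.2.1) (a.2.1.1 2 + a.2.2.1) (a.2.1.1 3),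
                    mk4 (a.2.1.2 0) (a.2.1.2 1 - a.2.2.2) (a.2.1.2 2 + a.2.2.2) (a.2.1.2 3)),
                   (a.2.2.1, a.2.2.2)⟩) ?_ ?_ ?_ ?_
  · rintro ⟨k, ⟨p, q⟩, j, l⟩ h₁ h₂
    dsimp only at h₂ ⊢
    simp only [Finset.mem_sigma, Finset.mem_product, Finset.mem_range,
      Finset.HasAntidiagonal.mem_antidiagonal] at h₁ ⊢
    obtain ⟨hk, hpq, hjl⟩ := h₁
    have hj : j ≤ p 1 := by
      by_contra hc
      apply h₂
      rw [Nat.choose_eq_zero_of_lt (by omega)]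
      simp
    have hl : l ≤ q 1 := by
      by_contra hc
      apply h₂
      rw [Nat.choose_eq_zero_of_lt (show q 1 < l by omega)]
      simp
    have c0 : p 0 + q 0 = m 0 := by simpa using DFunLike.congr_fun hpq 0
    have c1 : p 1 + q 1 = m 1 + k := by simpa using DFunLike.congr_fun hpq 1
    have c2 : p 2 + q 2 = m 2 - k := by simpa using DFunLike.congr_fun hpq 2
    have c3 : p 3 + q 3 = m 3 := by simpa using DFunLike.congr_fun hpq 3
    refine ⟨?_, ?_, ?_⟩
    · rw [mk4_add, ← mk4_eta m, mk4_inj]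
      refine ⟨by simpa using c0, by omega, by omega, by simpa using c3⟩
    · simp only [mk4_app2]
      omega
    · simp only [mk4_app2]
      omega
  · rintro ⟨k, ⟨p, q⟩, j, l⟩ h₁ h₂ ⟨k', ⟨p', q'⟩, j', l'⟩ h₁' h₂' heq
    dsimp only at h₂ h₂' heq
    simp only [Finset.mem_sigma, Finset.mem_product, Finset.mem_range,
      Finset.HasAntidiagonal.mem_antidiagonal] at h₁ h₁'
    obtain ⟨hk, hpq, hjl⟩ := h₁
    obtain ⟨hk', hpq', hjl'⟩ := h₁'
    have hj : j ≤ p 1 := by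
      by_contra hc; apply h₂; rw [Nat.choose_eq_zero_of_lt (by omega)]; simp
    have hl : l ≤ q 1 := by
      by_contra hc; apply h₂; rw [Nat.choose_eq_zero_of_lt (show q 1 < l by omega)]; simp
    have hj' : j' ≤ p' 1 := by
      by_contra hc; apply h₂'; rw [Nat.choose_eq_zero_of_lt (show p' 1 < j' by omega)]; simp
    have hl' : l' ≤ q' 1 := by
      by_contra hc; apply h₂'; rw [Nat.choose_eq_zero_of_lt (show q' 1 < l' by omega)]; simp
    simp only [Sigma.mk.inj_iff, Prod.mk.injEq, heq_eq_eq] at heq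
    obtain ⟨⟨hP, hQ⟩, hjj, hll⟩ := heq
    subst hjj
    subst hll
    rw [mk4_inj] at hP hQ
    obtain ⟨P0, P1, P2, P3⟩ := hP
    obtain ⟨Q0, Q1, Q2, Q3⟩ := hQ
    have hp : p = p' := by
      rw [← mk4_eta p, ← mk4_eta p', mk4_inj]
      exact ⟨P0, by omega, by omega, P3⟩
    have hq : q = q' := by
      rw [← mk4_eta q, ← mk4_eta q', mk4_inj]
      exact ⟨Q0, by omega, by omega, Q3⟩
    have hkk : k = k' := by omega
    subst hkk
    subst hp
    subst hq
    rfl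
  · rintro ⟨⟨p, q⟩, j, l⟩ h₁ h₂
    dsimp only at h₂
    simp only [Finset.mem_sigma, Finset.mem_product, Finset.mem_range,
      Finset.HasAntidiagonal.mem_antidiagonal] at h₁
    obtain ⟨hpq, hj, hl⟩ := h₁
    have hj2 : j ≤ p 2 := by omega
    have hl2 : l ≤ q 2 := by omega
    have c0 : p 0 + q 0 = m 0 := by simpa using DFunLike.congr_fun hpq 0
    have c1 : p 1 + q 1 = m 1 := by simpa using DFunLike.congr_fun hpq 1
    have c2 : p 2 + q 2 = m 2 := by simpa using DFunLike.congr_fun hpq 2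
    have c3 : p 3 + q 3 = m 3 := by simpa using DFunLike.congr_fun hpq 3
    refine ⟨⟨j + l, (mk4 (p 0) (p 1 + j) (p 2 - j) (p 3),
      mk4 (q 0) (q 1 + l) (q 2 - l) (q 3)), (j, l)⟩, ?_, ?_, ?_⟩
    · simp only [Finset.mem_sigma, Finset.mem_product, Finset.mem_range,
        Finset.HasAntidiagonal.mem_antidiagonal]
      refine ⟨by omega, ?_, by simp⟩
      rw [mk4_add, mk4_inj]
      exact ⟨c0, by omega, by omega, c3⟩
    · simp only [mk4_app0, mk4_app1, mk4_app2, mk4_app3]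
      intro hzero
      apply h₂
      rw [← hzero]
      have e1 : (p 1 + j).choose j = (p 1 + j).choose (p 1) := by
        simpa using (Nat.choose_symm (Nat.le_add_left j (p 1))).symm
      have e2 : (q 1 + l).choose l = (q 1 + l).choose (q 1) := by
        simpa using (Nat.choose_symm (Nat.le_add_left l (q 1))).symm
      rw [e1, e2]
    · dsimp only
      simp only [mk4_app0, mk4_app1, mk4_app2, mk4_app3]
      have hP : mk4 (p 0) (p 1 + j - j) (p 2 - j + j) (p 3) = p := by
        have a1 : p 1 + j - j = p 1 := by omega
        have a2 : p 2 - j + j = p 2 := by omega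
        rw [a1, a2, mk4_eta]
      have hQ : mk4 (q 0) (q 1 + l - l) (q 2 - l + l) (q 3) = q := by
        have a1 : q 1 + l - l = q 1 := by omega
        have a2 : q 2 - l + l = q 2 := by omega
        rw [a1, a2, mk4_eta]
      rw [hP, hQ]
  · rintro ⟨k, ⟨p, q⟩, j, l⟩ h₁ h₂
    dsimp only at h₂ ⊢
    simp only [Finset.mem_sigma, Finset.mem_product, Finset.mem_range,
      Finset.HasAntidiagonal.mem_antidiagonal] at h₁
    obtain ⟨hk, hpq, hjl⟩ := h₁
    have hj : j ≤ p 1 := by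
      by_contra hc; apply h₂; rw [Nat.choose_eq_zero_of_lt (by omega)]; simp
    have hl : l ≤ q 1 := by
      by_contra hc; apply h₂; rw [Nat.choose_eq_zero_of_lt (show q 1 < l by omega)]; simp
    simp only [mk4_app0, mk4_app1, mk4_app2, mk4_app3]
    have ep : mk4 (p 0) (p 1 - j + j) (p 2 + j - j) (p 3) = p := by
      have a1 : p 1 - j + j = p 1 := by omega
      have a2 : p 2 + j - j = p 2 := by omega
      rw [a1, a2, mk4_eta]
    have eq' : mk4 (q 0) (q 1 - l + l) (q 2 + l - l) (q 3) = q := by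
      have a1 : q 1 - l + l = q 1 := by omega
      have a2 : q 2 + l - l = q 2 := by omega
      rw [a1, a2, mk4_eta]
    rw [ep, eq']
    have e1 : (p 1 - j + j).choose (p 1 - j) = (p 1).choose j := by
      have h' : p 1 - j + j = p 1 := by omega
      rw [h', ← Nat.choose_symm hj]
    have e2 : (q 1 - l + l).choose (q 1 - l) = (q 1).choose l := by
      have h' : q 1 - l + l = q 1 := by omega
      rw [h', ← Nat.choose_symm hl]
    rw [e1, e2]

lemma substP2_X2 : substP2 (MvPowerSeries.X 2) = MvPowerSeries.X 2 := by
  classical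
  ext m
  rw [coeff_substP2, MvPowerSeries.coeff_X, single2_eq]
  by_cases h : m = mk4 0 0 1 0
  · rw [if_pos h, h]
    simp only [mk4_app0, mk4_app1, mk4_app2, mk4_app3]
    rw [Finset.sum_range_succ, Finset.sum_range_succ, Finset.sum_range_zero,
      MvPowerSeries.coeff_X, MvPowerSeries.coeff_X, single2_eq]
    norm_num [mk4_inj]
  · rw [if_neg h]
    apply Finset.sum_eq_zero
    intro k hk
    rw [MvPowerSeries.coeff_X, single2_eq, if_neg, mul_zero]
    intro hc
    rw [mk4_inj] at hc
    apply h
    obtain ⟨h0, h1, h2c, h3⟩ := hc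
    have hm1 : m 1 = 0 := by omega
    have hk0 : k = 0 := by omega
    have hm2 : m 2 = 1 := by omega
    rw [← mk4_eta m, h0, h3, hm1, hm2]

lemma pd0_X2 : pd 0 (MvPowerSeries.X 2 : MvPowerSeries (Fin 4) ℚ) = 0 := by
  ext m
  rw [coeff_pd]
  classical
  rw [MvPowerSeries.coeff_X]
  have : m + Finsupp.single 0 1 ≠ Finsupp.single (2 : Fin 4) 1 := by
    intro h
    have := DFunLike.congr_fun h 0
    simp [Finsupp.add_apply, Finsupp.single_apply] at this
  rw [if_neg this]
  simp
/-- The operator `L = ∂/∂s + 2v ∂/∂u` on `ℚ[[s,u,v,w]]` (variables `s,u,v,w = 0,1,2,3`). -/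
noncomputable def Lop (F : MvPowerSeries (Fin 4) ℚ) : MvPowerSeries (Fin 4) ℚ :=
  pd 0 F + 2 * MvPowerSeries.X 2 * pd 1 F

/-- The operator `P = 2v ∂/∂s + (2v²+2w) ∂/∂u` on `ℚ[[s,u,v,w]]`. -/
noncomputable def Pop (F : MvPowerSeries (Fin 4) ℚ) : MvPowerSeries (Fin 4) ℚ :=
  2 * MvPowerSeries.X 2 * pd 0 F +
    (2 * MvPowerSeries.X 2 ^ 2 + 2 * MvPowerSeries.X 3) * pd 1 F

/-- With `P¹ = Γ_{x₁}Γ_{x₂} + y₁Γ_{x₂}²` and `P² = (1/2)Γ_{x₂}²` in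
`ℚ[[x₁,x₂,y₁,y₂]]`, after the substitution `(x₁,x₂,y₁,y₂) = (s,u+v,v,w)` one has
`(P¹ substituted)_{ss} = G_{us}G_{ss} + G_{uss}G_s + G_u·(L G_{ss}) + G_{us}·(L G_s)` and
`(P² substituted)_{ss} = G_{us}G_{us} + G_{uss}G_u`, where `G = Γ(s,u+v,v,w)`.
These are the paper's Equations (P1forP2) and (P2forP2). -/
theorem P_potentials_P2
    (Γ P1 P2 : MvPowerSeries (Fin 4) ℚ)
    (hP1 : P1 = pd 0 Γ * pd 1 Γ + MvPowerSeries.X 2 * (pd 1 Γ) ^ 2)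
    (hP2 : P2 = (MvPowerSeries.C (σ := Fin 4) (R := ℚ) (1 / 2)) * (pd 1 Γ) ^ 2)
    (G : MvPowerSeries (Fin 4) ℚ) (hG : G = substP2 Γ) :
    pd 0 (pd 0 (substP2 P1)) =
        pd 1 (pd 0 G) * pd 0 (pd 0 G) + pd 1 (pd 0 (pd 0 G)) * pd 0 G
          + pd 1 G * Lop (pd 0 (pd 0 G)) + pd 1 (pd 0 G) * Lop (pd 0 G) ∧
    pd 0 (pd 0 (substP2 P2)) =
        pd 1 (pd 0 G) * pd 1 (pd 0 G) + pd 1 (pd 0 (pd 0 G)) * pd 1 G := by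
  subst hP1 hP2 hG
  have e1 : pd 0 (substP2 Γ) = substP2 (pd 0 Γ) := (substP2_pd0 Γ).symm
  have e2 : pd 1 (substP2 Γ) = substP2 (pd 1 Γ) := (substP2_pd1 Γ).symm
  have key12 : pd 1 (substP2 (pd 0 Γ)) = pd 0 (substP2 (pd 1 Γ)) := by
    rw [← substP2_pd1, ← substP2_pd0]
    exact congrArg substP2 (pd_comm 1 0 Γ)
  constructor
  · have hsub : substP2 (pd 0 Γ * pd 1 Γ + MvPowerSeries.X 2 * pd 1 Γ ^ 2)
        = substP2 (pd 0 Γ) * substP2 (pd 1 Γ)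
          + MvPowerSeries.X 2 * (substP2 (pd 1 Γ) * substP2 (pd 1 Γ)) := by
      rw [pow_two, substP2_add, substP2_mul, substP2_mul, substP2_mul, substP2_X2]
    rw [hsub, e1, e2, key12]
    have hc2 : pd 1 (pd 0 (substP2 (pd 0 Γ))) = pd 0 (pd 0 (substP2 (pd 1 Γ))) := by
      rw [pd_comm 1 0, key12]
    rw [hc2]
    simp only [Lop, pd_add, pd_mul, pd0_X2, zero_mul, zero_add, key12, hc2]
    ring
  · have hsub : substP2 (MvPowerSeries.C (σ := Fin 4) (R := ℚ) (1/2) * pd 1 Γ ^ 2)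
        = MvPowerSeries.C (σ := Fin 4) (R := ℚ) (1/2) * (substP2 (pd 1 Γ) * substP2 (pd 1 Γ)) := by
      rw [pow_two, substP2_C_mul, substP2_mul]
    rw [hsub, e1, e2, key12]
    have hc2 : pd 1 (pd 0 (substP2 (pd 0 Γ))) = pd 0 (pd 0 (substP2 (pd 1 Γ))) := by
      rw [pd_comm 1 0, key12]
    rw [hc2]
    have hC : (MvPowerSeries.C (σ := Fin 4) (R := ℚ)) (1/2) * 2 = 1 := by
      rw [← map_ofNat (MvPowerSeries.C (σ := Fin 4) (R := ℚ)) 2, ← map_mul]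
      norm_num
    simp only [pd_C_mul, pd_mul, pd_C, pd_add, zero_mul, zero_add]
    linear_combination (pd 0 (pd 0 (substP2 (pd 1 Γ))) * substP2 (pd 1 Γ)
      + pd 0 (substP2 (pd 1 Γ)) * pd 0 (substP2 (pd 1 Γ))) * hC
end

section
/- Let N, T, C : ℕ × ℕ → ℚ, and for (m,n) write d := m + n, and let S denote summation over all ordered splittings m = m' + m'', n = n' + n'' with m' + n' ≥ 1 and m'' + n'' ≥ 1, writing d' := m' + n' and d'' := m'' + n''. Assume for every (m,n) with d ≥ 1: (i) d·T(m,n) = (2d−2)·N(m,n) + S[ binomial(2d−2, 2d'−1)·d'·d''·m'·n''·N(m',n')·N(m'',n'') ], and (ii) C(m,n) = 2·T(m,n) − 2·S[ binomial(2d−2, 2d'−1)·m'·n''·N(m',n')·N(m'',n'') ]. Then for every (m,n) with d ≥ 1: d·C(m,n) = 4(d−1)·N(m,n) + S[ binomial(2d−2, 2d'−1)·(m'·n'' + n'·m'')·(d'·d'' − d)·N(m',n')·N(m'',n'') ]. (This is Example 4.6 of the paper: the closed formula for the numbers C_{(m,n)} of irreducible cuspidal rational curves of bi-degree (m,n) in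 P¹×P¹ through 2m+2n−2 general points in terms of the numbers N_{(m,n)} of nodal ones, where (i) is the coefficient form of the topological recursion for the tangency numbers T and (ii) is the coefficient form of the cusp equation at v = w = 0.) -/
/-- Sum over all ordered splittings `m = m' + m''`, `n = n' + n''` with `m' + n' ≥ 1` and
`m'' + n'' ≥ 1`, of `f m' n' m'' n''`. -/
noncomputable def splitSum (m n : ℕ) (f : ℕ → ℕ → ℕ → ℕ → ℚ) : ℚ :=
  ∑ p ∈ (Finset.range (m + 1) ×ˢ Finset.range (n + 1)).filter
      (fun p => 1 ≤ p.1 + p.2 ∧ 1 ≤ (m - p.1) + (n - p.2)),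
    f p.1 p.2 (m - p.1) (n - p.2)

lemma splitSum_swap (m n : ℕ) (f : ℕ → ℕ → ℕ → ℕ → ℚ) :
    splitSum m n f = splitSum m n (fun a b c d => f c d a b) := by
  unfold splitSum
  refine Finset.sum_nbij' (fun p => (m - p.1, n - p.2)) (fun p => (m - p.1, n - p.2))
    ?_ ?_ ?_ ?_ ?_
  · intro p hp
    simp only [Finset.mem_filter, Finset.mem_product, Finset.mem_range] at hp ⊢
    omega
  · intro p hp
    simp only [Finset.mem_filter, Finset.mem_product, Finset.mem_range] at hp ⊢
    omega
  · intro p hp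
    simp only [Finset.mem_filter, Finset.mem_product, Finset.mem_range] at hp
    simp only
    rw [Prod.ext_iff]
    exact ⟨by simp; omega, by simp; omega⟩
  · intro p hp
    simp only [Finset.mem_filter, Finset.mem_product, Finset.mem_range] at hp
    simp only
    rw [Prod.ext_iff]
    exact ⟨by simp; omega, by simp; omega⟩
  · intro p hp
    simp only [Finset.mem_filter, Finset.mem_product, Finset.mem_range] at hp
    simp only
    have e1 : m - (m - p.1) = p.1 := by omega
    have e2 : n - (n - p.2) = p.2 := by omega
    rw [e1, e2]

/-- Example 4.6 of the paper: Let `N, T, C : ℕ × ℕ → ℚ` and write `d = m + n`,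
`d' = m' + n'`, `d'' = m'' + n''`.  Assume, for every `(m,n)` with `d ≥ 1`,
(i) `d·T(m,n) = (2d−2)·N(m,n)
      + Σ binom(2d−2, 2d'−1)·d'·d''·m'·n''·N(m',n')·N(m'',n'')`, and
(ii) `C(m,n) = 2·T(m,n) − 2·Σ binom(2d−2, 2d'−1)·m'·n''·N(m',n')·N(m'',n'')`,
the sums being over ordered splittings `m = m' + m''`, `n = n' + n''` with `d', d'' ≥ 1`.
Then for every `(m,n)` with `d ≥ 1`:
`d·C(m,n) = 4(d−1)·N(m,n)
   + Σ binom(2d−2, 2d'−1)·(m'·n'' + n'·m'')·(d'·d'' − d)·N(m',n')·N(m'',n'')`. -/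
theorem cuspidal_numbers_P1xP1
    (N T C : ℕ × ℕ → ℚ)
    (hT : ∀ m n : ℕ, 1 ≤ m + n →
      (m + n : ℚ) * T (m, n) =
        (2 * (m + n : ℚ) - 2) * N (m, n) +
          splitSum m n (fun m' n' m'' n'' =>
            (Nat.choose (2 * (m + n) - 2) (2 * (m' + n') - 1) : ℚ) *
              (m' + n' : ℚ) * (m'' + n'' : ℚ) * (m' : ℚ) * (n'' : ℚ) *
              N (m', n') * N (m'', n'')))
    (hC : ∀ m n : ℕ, 1 ≤ m + n →
      C (m, n) =
        2 * T (m, n) -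
          2 * splitSum m n (fun m' n' m'' n'' =>
            (Nat.choose (2 * (m + n) - 2) (2 * (m' + n') - 1) : ℚ) *
              (m' : ℚ) * (n'' : ℚ) * N (m', n') * N (m'', n''))) :
    ∀ m n : ℕ, 1 ≤ m + n →
      (m + n : ℚ) * C (m, n) =
        4 * ((m + n : ℚ) - 1) * N (m, n) +
          splitSum m n (fun m' n' m'' n'' =>
            (Nat.choose (2 * (m + n) - 2) (2 * (m' + n') - 1) : ℚ) *
              ((m' : ℚ) * (n'' : ℚ) + (n' : ℚ) * (m'' : ℚ)) *
              ((m' + n' : ℚ) * (m'' + n'' : ℚ) - (m + n : ℚ)) *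
              N (m', n') * N (m'', n'')) := by
  intro m n h
  rw [hC m n h]
  have hTe := hT m n h
  have key : splitSum m n (fun m' n' m'' n'' =>
        (Nat.choose (2 * (m + n) - 2) (2 * (m' + n') - 1) : ℚ) *
          ((m' : ℚ) * (n'' : ℚ) + (n' : ℚ) * (m'' : ℚ)) *
          ((m' + n' : ℚ) * (m'' + n'' : ℚ) - (m + n : ℚ)) *
          N (m', n') * N (m'', n'')) =
      2 * splitSum m n (fun m' n' m'' n'' =>
        (Nat.choose (2 * (m + n) - 2) (2 * (m' + n') - 1) : ℚ) *
          (m' : ℚ) * (n'' : ℚ) *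
          ((m' + n' : ℚ) * (m'' + n'' : ℚ) - (m + n : ℚ)) *
          N (m', n') * N (m'', n'')) := by
    have h2 : splitSum m n (fun m' n' m'' n'' =>
        (Nat.choose (2 * (m + n) - 2) (2 * (m' + n') - 1) : ℚ) *
          ((n' : ℚ) * (m'' : ℚ)) *
          ((m' + n' : ℚ) * (m'' + n'' : ℚ) - (m + n : ℚ)) *
          N (m', n') * N (m'', n'')) =
        splitSum m n (fun m' n' m'' n'' =>
        (Nat.choose (2 * (m + n) - 2) (2 * (m' + n') - 1) : ℚ) *
          (m' : ℚ) * (n'' : ℚ) *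
          ((m' + n' : ℚ) * (m'' + n'' : ℚ) - (m + n : ℚ)) *
          N (m', n') * N (m'', n'')) := by
      rw [splitSum_swap]
      unfold splitSum
      apply Finset.sum_congr rfl
      intro p hp
      simp only [Finset.mem_filter, Finset.mem_product, Finset.mem_range] at hp
      have hcb : Nat.choose (2 * (m + n) - 2) (2 * ((m - p.1) + (n - p.2)) - 1) =
          Nat.choose (2 * (m + n) - 2) (2 * (p.1 + p.2) - 1) := by
        have hk : 2 * (p.1 + p.2) - 1 ≤ 2 * (m + n) - 2 := by omega
        rw [← Nat.choose_symm hk]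
        congr 1
        omega
      have e1 : m - (m - p.1) = p.1 := by omega
      have e2 : n - (n - p.2) = p.2 := by omega
      simp only [e1, e2, hcb]
      ring
    have hadd : splitSum m n (fun m' n' m'' n'' =>
        (Nat.choose (2 * (m + n) - 2) (2 * (m' + n') - 1) : ℚ) *
          ((m' : ℚ) * (n'' : ℚ) + (n' : ℚ) * (m'' : ℚ)) *
          ((m' + n' : ℚ) * (m'' + n'' : ℚ) - (m + n : ℚ)) *
          N (m', n') * N (m'', n'')) =
        splitSum m n (fun m' n' m'' n'' =>
        (Nat.choose (2 * (m + n) - 2) (2 * (m' + n') - 1) : ℚ) *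
          ((n' : ℚ) * (m'' : ℚ)) *
          ((m' + n' : ℚ) * (m'' + n'' : ℚ) - (m + n : ℚ)) *
          N (m', n') * N (m'', n'')) +
        splitSum m n (fun m' n' m'' n'' =>
        (Nat.choose (2 * (m + n) - 2) (2 * (m' + n') - 1) : ℚ) *
          (m' : ℚ) * (n'' : ℚ) *
          ((m' + n' : ℚ) * (m'' + n'' : ℚ) - (m + n : ℚ)) *
          N (m', n') * N (m'', n'')) := by
      unfold splitSum
      rw [← Finset.sum_add_distrib]
      exact Finset.sum_congr rfl (fun p _ => by ring)
    rw [hadd, h2]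
    ring
  have hpt : splitSum m n (fun m' n' m'' n'' =>
        (Nat.choose (2 * (m + n) - 2) (2 * (m' + n') - 1) : ℚ) *
          (m' : ℚ) * (n'' : ℚ) *
          ((m' + n' : ℚ) * (m'' + n'' : ℚ) - (m + n : ℚ)) *
          N (m', n') * N (m'', n'')) =
      splitSum m n (fun m' n' m'' n'' =>
        (Nat.choose (2 * (m + n) - 2) (2 * (m' + n') - 1) : ℚ) *
          (m' + n' : ℚ) * (m'' + n'' : ℚ) * (m' : ℚ) * (n'' : ℚ) *
          N (m', n') * N (m'', n'')) -
      (m + n : ℚ) * splitSum m n (fun m' n' m'' n'' =>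
        (Nat.choose (2 * (m + n) - 2) (2 * (m' + n') - 1) : ℚ) *
          (m' : ℚ) * (n'' : ℚ) * N (m', n') * N (m'', n'')) := by
    unfold splitSum
    rw [Finset.mul_sum, ← Finset.sum_sub_distrib]
    apply Finset.sum_congr rfl
    intro p _
    ring
  linear_combination 2 * hTe - key - 2 * hpt
end
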